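/- Let Ω be a σ-compact, locally compact Hausdorff space, 𝒜 a linear space of continuous real-valued functions on Ω separating points, and ℱ the complete lattice cone generated by 𝒜. Then for every f ∈ ℱ, the map f ∘ Φ⁻¹ on Φ(Ω) extends to a function in the complete lattice cone G of functions on 𝒜* generated by the evaluation functionals a* ↦ a*(a), a ∈ 𝒜; and consequently, for every subset S ⊆ Ω, clConv_ℱ S = Φ⁻¹(clConv_G Φ(S)), where Φ(ω)(a) = a(ω) is the Gelfand transform. -/
import Mathlib


open Filter Topology Set

/-- A complete lattice cone of `(-∞,∞]`-valued functions: a convex cone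
stable under pointwise suprema of arbitrary families. -/
def IsCLC {X : Type} (K : Set (X → EReal)) : Prop :=
  (∀ f ∈ K, ∀ g ∈ K, ∀ α β : ℝ, 0 ≤ α → 0 ≤ β →
    (fun x => (α : EReal) * f x + (β : EReal) * g x) ∈ K) ∧
  ∀ (ι : Type) (F : ι → X → EReal), (∀ i, F i ∈ K) → (fun x => ⨆ i, F i x) ∈ K

/-- The complete lattice cone generated by a family of real-valued functions. -/
def genCLC {X : Type} (A : Set (X → ℝ)) : Set (X → EReal) :=
  ⋂₀ {K | IsCLC K ∧ ∀ a ∈ A, (fun x => ((a x : ℝ) : EReal)) ∈ K}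

/-- The Gelfand transform `Φ(ω)(a) = a(ω)`, valued in the continuous (for the
compact-open topology on `𝒜 ⊆ C(Ω,ℝ)`) linear functionals on `𝒜`. -/
def PhiMap {Ω : Type} [TopologicalSpace Ω] (A : Submodule ℝ C(Ω, ℝ)) (ω : Ω) :
    A →L[ℝ] ℝ where
  toFun a := (a : C(Ω, ℝ)) ω
  map_add' a b := rfl
  map_smul' c a := rfl
  cont := (ContinuousEvalConst.continuous_eval_const ω).comp continuous_subtype_val

lemma genCLC_isCLC {X : Type} (A : Set (X → ℝ)) : IsCLC (genCLC A) := by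
  constructor
  · intro f hf g hg α β hα hβ
    intro K hK
    exact hK.1.1 f (hf K hK) g (hg K hK) α β hα hβ
  · intro ι F hF K hK
    exact hK.1.2 ι F (fun i => hF i K hK)

lemma genCLC_subset {X : Type} (A : Set (X → ℝ)) (K : Set (X → EReal))
    (hK : IsCLC K) (hA : ∀ a ∈ A, (fun x => ((a x : ℝ) : EReal)) ∈ K) :
    genCLC A ⊆ K := fun _ hf => hf K ⟨hK, hA⟩

lemma mem_genCLC {X : Type} {A : Set (X → ℝ)} {a : X → ℝ} (ha : a ∈ A) :
    (fun x => ((a x : ℝ) : EReal)) ∈ genCLC A := fun _ hK => hK.2 a ha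

/-- Every `f` in the complete lattice cone `ℱ` generated by `𝒜` extends along
`Φ` to a member of the complete lattice cone `G` on `𝒜*` generated by the
evaluation functionals, and consequently `clConv_ℱ S = Φ⁻¹(clConv_G Φ(S))`. -/
theorem stmt19 {Ω : Type} [TopologicalSpace Ω] [T2Space Ω] [SigmaCompactSpace Ω]
    [WeaklyLocallyCompactSpace Ω]
    (A : Submodule ℝ C(Ω, ℝ))
    (hsep : ∀ ω₁ ω₂ : Ω, ω₁ ≠ ω₂ → ∃ a ∈ A, a ω₁ ≠ a ω₂)
    (A' : Set (Ω → ℝ)) (hA' : A' = {g | ∃ a : A, g = fun ω => (a : C(Ω, ℝ)) ω})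
    (evals : Set ((A →L[ℝ] ℝ) → ℝ))
    (hevals : evals = {g | ∃ a : A, g = fun h => h a}) :
    (∀ f ∈ genCLC A', ∃ g ∈ genCLC evals, ∀ ω : Ω, g (PhiMap A ω) = f ω) ∧
    ∀ S : Set Ω,
      {ω | ∀ f ∈ genCLC A', f ω ≤ ⨆ s ∈ S, f s}
        = (fun ω => PhiMap A ω) ⁻¹'
            {h | ∀ g ∈ genCLC evals, g h ≤ ⨆ d ∈ (PhiMap A) '' S, g d} := by
  subst hA' hevals
  -- pullback: composing with Φ sends genCLC evals into genCLC A'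
  have key1 : ∀ g ∈ genCLC {g | ∃ a : A, g = fun h => h a},
      (fun ω => g (PhiMap A ω)) ∈ genCLC {g | ∃ a : A, g = fun ω => (a : C(Ω, ℝ)) ω} := by
    intro g hg
    have : genCLC {g | ∃ a : A, g = fun h => h a} ⊆
        {g : (A →L[ℝ] ℝ) → EReal |
          (fun ω => g (PhiMap A ω)) ∈ genCLC {g | ∃ a : A, g = fun ω => (a : C(Ω, ℝ)) ω}} := by
      apply genCLC_subset
      · constructor
        · intro f hf g hg α β hα hβ
          exact (genCLC_isCLC _).1 _ hf _ hg α β hα hβ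
        · intro ι F hF
          exact (genCLC_isCLC _).2 ι _ hF
      · rintro a ⟨a₀, rfl⟩
        exact mem_genCLC ⟨a₀, rfl⟩
    exact this hg
  -- forward extension
  have key2 : ∀ f ∈ genCLC {g | ∃ a : A, g = fun ω => (a : C(Ω, ℝ)) ω},
      ∃ g ∈ genCLC {g | ∃ a : A, g = fun h => h a}, ∀ ω : Ω, g (PhiMap A ω) = f ω := by
    intro f hf
    have : genCLC {g | ∃ a : A, g = fun ω => (a : C(Ω, ℝ)) ω} ⊆
        {f : Ω → EReal | ∃ g ∈ genCLC {g | ∃ a : A, g = fun h => h a},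
          ∀ ω : Ω, g (PhiMap A ω) = f ω} := by
      apply genCLC_subset
      · constructor
        · rintro f ⟨gf, hgf, hgf'⟩ g ⟨gg, hgg, hgg'⟩ α β hα hβ
          refine ⟨fun h => (α : EReal) * gf h + (β : EReal) * gg h,
            (genCLC_isCLC _).1 _ hgf _ hgg α β hα hβ, fun ω => by simp [hgf' ω, hgg' ω]⟩
        · intro ι F hF
          choose G hG hG' using hF
          refine ⟨fun h => ⨆ i, G i h, (genCLC_isCLC _).2 ι _ hG, fun ω => ?_⟩
          exact iSup_congr fun i => hG' i ω
      · rintro a ⟨a₀, rfl⟩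
        exact ⟨fun h => ((h a₀ : ℝ) : EReal), mem_genCLC ⟨a₀, rfl⟩, fun ω => rfl⟩
    exact this hf
  refine ⟨key2, fun S => ?_⟩
  ext ω
  simp only [mem_setOf_eq, mem_preimage]
  constructor
  · intro hω g hg
    obtain heq := key1 g hg
    have h1 := hω _ heq
    rw [iSup_image]
    exact h1
  · intro hω f hf
    obtain ⟨g, hg, heq⟩ := key2 f hf
    have h1 := hω g hg
    rw [iSup_image] at h1
    calc f ω = g (PhiMap A ω) := (heq ω).symm
      _ ≤ ⨆ s ∈ S, g (PhiMap A s) := h1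
      _ = ⨆ s ∈ S, f s := by
          exact iSup_congr fun s => iSup_congr fun _ => heq s
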